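/- For any two permutations π, σ of a finite set Ω with distinguished element F, the contracted permutations satisfy hd(π^△, σ^△) ≥ hd(π, σ) − 3. -/

import Mathlib

/-- Hamming distance between two permutations. -/
noncomputable def hd {Ω : Type*} (π σ : Equiv.Perm Ω) : ℕ :=
  Set.ncard {x | π x ≠ σ x}

open scoped Classical in
/-- Contraction of `π` relative to the distinguished element `F`:
swap the symbols `F` and `π F` in the image string of `π`. -/
noncomputable def ctr {Ω : Type*} (F : Ω) (π : Equiv.Perm Ω) : Equiv.Perm Ω :=
  π.trans (Equiv.swap F (π F))

theorem stmt1 {Ω : Type*} [Fintype Ω] (F : Ω) (π σ : Equiv.Perm Ω) :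
    hd (ctr F π) (ctr F σ) + 3 ≥ hd π σ := by
  classical
  set A : Set Ω := {x | π x ≠ σ x}
  set B : Set Ω := {x | (ctr F π) x ≠ (ctr F σ) x}
  set S : Set Ω := {F, π.symm F, σ.symm F}
  have hsub : A ⊆ B ∪ S := by
    intro x hx
    by_cases hxS : x ∈ S
    · exact Or.inr hxS
    · left
      have hxF : x ≠ F := fun h => hxS (by simp [S, h])
      have hπ : π x ≠ F := by
        intro h
        exact hxS (by simp [S]; right; left; exact (Equiv.eq_symm_apply π).2 h)
      have hσ : σ x ≠ F := by
        intro h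
        exact hxS (by simp [S]; right; right; exact (Equiv.eq_symm_apply σ).2 h)
      have hπ2 : π x ≠ π F := fun h => hxF (π.injective h)
      have hσ2 : σ x ≠ σ F := fun h => hxF (σ.injective h)
      have e1 : (ctr F π) x = π x := by
        simp [ctr, Equiv.swap_apply_of_ne_of_ne hπ hπ2]
      have e2 : (ctr F σ) x = σ x := by
        simp [ctr, Equiv.swap_apply_of_ne_of_ne hσ hσ2]
      simpa [A, B, e1, e2] using hx
  have hAcard : A.ncard ≤ B.ncard + S.ncard := by
    calc A.ncard ≤ (B ∪ S).ncard := Set.ncard_le_ncard hsub (Set.toFinite _)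
    _ ≤ B.ncard + S.ncard := Set.ncard_union_le B S
  have hS : S.ncard ≤ 3 := by
    calc S.ncard ≤ ({π.symm F, σ.symm F} : Set Ω).ncard + 1 :=
          Set.ncard_insert_le _ _
    _ ≤ (({σ.symm F} : Set Ω).ncard + 1) + 1 :=
          Nat.add_le_add_right (Set.ncard_insert_le _ _) 1
    _ ≤ 3 := by simp
  have : A.ncard ≤ B.ncard + 3 := le_trans hAcard (Nat.add_le_add_left hS _)
  simpa [hd, A, B, ge_iff_le] using this
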